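/- For a connected graph G, the family of maximum stable sets of G² equals the family of maximum stable sets of G if and only if G is a complete graph. -/

import Mathlib

open SimpleGraph

attribute [local instance] Classical.propDecidable

variable {V : Type*}

/-- A stable (independent) set: pairwise non-adjacent vertices. -/
def IsStable (G : SimpleGraph V) (S : Finset V) : Prop :=
  ∀ ⦃a⦄, a ∈ S → ∀ ⦃b⦄, b ∈ S → ¬ G.Adj a b

/-- The stability (independence) number α(G). -/
noncomputable def alpha [Fintype V] (G : SimpleGraph V) : ℕ :=
  (Finset.univ.powerset.filter (fun S => IsStable G S)).sup Finset.card

/-- A maximum stable set, i.e. a member of Ω(G). -/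
def IsMaxStable [Fintype V] (G : SimpleGraph V) (S : Finset V) : Prop :=
  IsStable G S ∧ S.card = alpha G

/-- The square G² of a graph: distinct vertices adjacent iff at distance ≤ 2. -/
def square (G : SimpleGraph V) : SimpleGraph V where
  Adj u v := u ≠ v ∧ (G.Adj u v ∨ ∃ w, G.Adj u w ∧ G.Adj w v)
  symm := ⟨by
    rintro u v ⟨h, h2⟩
    refine ⟨h.symm, ?_⟩
    rcases h2 with h2 | ⟨w, hw1, hw2⟩
    · exact Or.inl h2.symm
    · exact Or.inr ⟨w, hw2.symm, hw1.symm⟩⟩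
  loopless := ⟨by rintro u ⟨h, _⟩; exact h rfl⟩

/-- G is α-square-stable if α(G) = α(G²). -/
def SquareStable [Fintype V] (G : SimpleGraph V) : Prop :=
  alpha G = alpha (square G)

/-- The maximum matching size μ(G). -/
noncomputable def mu [Fintype V] (G : SimpleGraph V) : ℕ :=
  sSup {n | ∃ M : G.Subgraph, M.IsMatching ∧ M.verts.ncard = 2 * n}

/-- f realizes a matching of A into S: it sends each a ∈ A to a distinct
neighbour in S (so the corresponding edges form a matching ⊆ (A,S) saturating A). -/
def MatchedInto (G : SimpleGraph V) (A S : Finset V) (f : V → V) : Prop :=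
  (∀ a ∈ A, f a ∈ S ∧ G.Adj a (f a)) ∧ ∀ a ∈ A, ∀ b ∈ A, f a = f b → a = b

/-- Well-covered: no isolated vertices, and every maximal stable set is maximum. -/
def WellCovered [Fintype V] (G : SimpleGraph V) : Prop :=
  (∀ v : V, ∃ w, G.Adj v w) ∧
    ∀ S : Finset V, IsStable G S → (∀ T : Finset V, IsStable G T → S ⊆ T → S = T) →
      S.card = alpha G

/-- Very well-covered: well-covered and |V(G)| = 2α(G). -/
def VeryWellCovered [Fintype V] (G : SimpleGraph V) : Prop :=
  WellCovered G ∧ Fintype.card V = 2 * alpha G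

/-- The set of pendant (degree-one) vertices of G. -/
noncomputable def pendants [Fintype V] (G : SimpleGraph V) : Finset V :=
  Finset.univ.filter (fun v => G.degree v = 1)

/-- G has a perfect matching consisting of pendant edges. -/
def HasPendantPerfectMatching [Fintype V] (G : SimpleGraph V) : Prop :=
  ∃ M : G.Subgraph, M.IsPerfectMatching ∧
    ∀ a b : V, M.Adj a b → G.degree a = 1 ∨ G.degree b = 1

/-- The star K_{1,n}: vertex 0 is the center, adjacent to n leaves. -/
def starGraph (n : ℕ) : SimpleGraph (Fin (n + 1)) where
  Adj u v := u ≠ v ∧ (u = 0 ∨ v = 0)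
  symm := ⟨by rintro u v ⟨h1, h2⟩; exact ⟨h1.symm, h2.symm⟩⟩
  loopless := ⟨by rintro u ⟨h, _⟩; exact h rfl⟩

-- auxiliary lemmas
lemma card_le_alpha [Fintype V] {G : SimpleGraph V} {S : Finset V} (hS : IsStable G S) :
    S.card ≤ alpha G := by
  apply Finset.le_sup
  simp [hS]

lemma exists_max_stable [Fintype V] (G : SimpleGraph V) :
    ∃ S : Finset V, IsMaxStable G S := by
  have hne : (Finset.univ.powerset.filter (fun S => IsStable G S)).Nonempty := by
    refine ⟨∅, ?_⟩
    simp [IsStable]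
  obtain ⟨S, hS, hcard⟩ := Finset.exists_mem_eq_sup _ hne Finset.card
  simp only [Finset.mem_filter] at hS
  exact ⟨S, hS.2, hcard.symm⟩

lemma square_adj_of_dist_le_two {G : SimpleGraph V} {u v : V} (hne : u ≠ v)
    (hd : G.dist u v ≤ 2) (hr : G.Reachable u v) : (square G).Adj u v := by
  obtain ⟨p, hp⟩ := hr.exists_walk_length_eq_dist
  refine ⟨hne, ?_⟩
  have hl : p.length ≤ 2 := hp ▸ hd
  cases p with
  | nil => exact absurd rfl hne
  | cons ha q =>
    cases q with
    | nil => exact Or.inl ha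
    | cons hb r =>
      cases r with
      | nil => exact Or.inr ⟨_, ha, hb⟩
      | cons hc s => simp [Nat.succ_le_succ_iff] at hl

lemma key_lemma [Fintype V] (G : SimpleGraph V) (hc : G.Connected)
    (H : ∀ S : Finset V, IsMaxStable (square G) S ↔ IsMaxStable G S) :
    ∀ k (S : Finset V) (x y : V), IsMaxStable G S → x ∈ S → y ∈ S → x ≠ y →
      G.dist x y = k → False := by
  intro k
  induction k using Nat.strong_induction_on with
  | _ k IH =>
    intro S x y hS hx hy hxy hk
    have hsq : IsStable (square G) S := ((H S).mpr hS).1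
    have h3 : ∀ a ∈ S, ∀ b ∈ S, a ≠ b → 3 ≤ G.dist a b := by
      intro a ha b hb hab
      by_contra h
      push_neg at h
      exact hsq ha hb (square_adj_of_dist_le_two hab (by omega) (hc a b))
    have hk3 : 3 ≤ k := hk ▸ h3 x hx y hy hxy
    obtain ⟨p, hp⟩ := (hc x y).exists_walk_length_eq_dist
    rw [hk] at hp
    cases p with
    | nil => exact hxy rfl
    | @cons _ w _ ha q =>
      have hxw : G.dist x w = 1 := dist_eq_one_iff_adj.mpr ha
      have hql : q.length = k - 1 := by simp at hp; omega
      have hub : G.dist w y ≤ k - 1 := hql ▸ dist_le q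
      have htri : G.dist x y ≤ G.dist x w + G.dist w y := hc.dist_triangle
      have hdw : G.dist w y = k - 1 := by omega
      have hwS : w ∉ S := fun hw => hS.1 hx hw ha
      have hwex : w ∉ S.erase x := fun hw => hwS (Finset.mem_of_mem_erase hw)
      have hstab : IsStable G (insert w (S.erase x)) := by
        intro a haS b hbS hab
        rcases Finset.mem_insert.mp haS with rfl | haS' <;>
          rcases Finset.mem_insert.mp hbS with rfl | hbS'
        · exact hab.ne rfl
        · have hbne : b ≠ x := Finset.ne_of_mem_erase hbS'
          have hbS'' : b ∈ S := Finset.mem_of_mem_erase hbS'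
          have h1 : G.dist a b = 1 := dist_eq_one_iff_adj.mpr hab
          have : G.dist x b ≤ G.dist x a + G.dist a b := hc.dist_triangle
          have := h3 x hx b hbS'' (Ne.symm hbne)
          omega
        · have hane : a ≠ x := Finset.ne_of_mem_erase haS'
          have haS'' : a ∈ S := Finset.mem_of_mem_erase haS'
          have h1 : G.dist b a = 1 := dist_eq_one_iff_adj.mpr hab.symm
          have : G.dist x a ≤ G.dist x b + G.dist b a := hc.dist_triangle
          have := h3 x hx a haS'' (Ne.symm hane)
          omega
        · exact hS.1 (Finset.mem_of_mem_erase haS') (Finset.mem_of_mem_erase hbS') hab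
      have hcard : (insert w (S.erase x)).card = S.card := by
        rw [Finset.card_insert_of_notMem hwex, Finset.card_erase_of_mem hx]
        have : 0 < S.card := Finset.card_pos.mpr ⟨x, hx⟩
        omega
      have hS' : IsMaxStable G (insert w (S.erase x)) := ⟨hstab, hcard ▸ hS.2⟩
      have hwy : w ≠ y := by
        intro h
        rw [h, SimpleGraph.dist_self] at hdw
        omega
      have hyne : y ∈ insert w (S.erase x) :=
        Finset.mem_insert_of_mem (Finset.mem_erase.mpr ⟨Ne.symm hxy, hy⟩)
      exact IH (k - 1) (by omega) _ w y hS' (Finset.mem_insert_self _ _) hyne hwy hdw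

/-- For a connected graph, Ω(G²) = Ω(G) iff G is complete. -/
theorem stmt7 [Fintype V] (G : SimpleGraph V) (hc : G.Connected) :
    (∀ S : Finset V, IsMaxStable (square G) S ↔ IsMaxStable G S) ↔
      ∀ u v : V, u ≠ v → G.Adj u v := by
  constructor
  · intro H u v huv
    by_contra hadj
    have hstab2 : IsStable G {u, v} := by
      intro a ha b hb hab
      simp only [Finset.mem_insert, Finset.mem_singleton] at ha hb
      rcases ha with rfl | rfl <;> rcases hb with rfl | rfl
      · exact hab.ne rfl
      · exact hadj hab
      · exact hadj hab.symm
      · exact hab.ne rfl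
    have h2 : 2 ≤ alpha G := by
      have := card_le_alpha hstab2
      rwa [Finset.card_pair huv] at this
    obtain ⟨S, hS⟩ := exists_max_stable G
    have h2' : 1 < S.card := by
      have := hS.2
      omega
    obtain ⟨a, haS, b, hbS, hab⟩ := Finset.one_lt_card.mp h2'
    exact key_lemma G hc H _ S a b hS haS hbS hab rfl
  · intro hcomp S
    have hGsq : square G = G := by
      ext u v
      constructor
      · rintro ⟨hne, -⟩
        exact hcomp u v hne
      · intro h
        exact ⟨h.ne, Or.inl h⟩
    rw [hGsq]
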